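/- Corollary 4: For a linear functional index coding problem over F_q (receiver R_i's side information is xM_{H_i} and demand is xM_{W_i}), a matrix M ∈ F_q^{nK × L} gives a δ-error-correcting functional index code x ↦ xM if and only if wt(xM) ≥ 2δ + 1 for every x ∈ ∪_{i∈[N]} { s ∈ F_q^{nK} : sM_{H_i} = 0 and sM_{W_i} ≠ 0 }. -/

import Mathlib

open Matrix

lemma norm_split {ι : Type*} [Fintype ι] [DecidableEq ι] {F : Type*} [Field F] [DecidableEq F]
    (v : ι → F) (δ : ℕ) (h : hammingNorm v ≤ 2 * δ) :
    ∃ a b : ι → F, v = a + b ∧ hammingNorm a ≤ δ ∧ hammingNorm b ≤ δ := by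
  classical
  set s : Finset ι := Finset.univ.filter (fun i => v i ≠ 0) with hs
  have hsc : s.card = hammingNorm v := rfl
  obtain ⟨t, hts, htc⟩ := Finset.exists_subset_card_eq (s := s) (n := min s.card δ)
    (by exact min_le_left _ _)
  refine ⟨fun i => if i ∈ t then v i else 0, fun i => if i ∈ t then 0 else v i, ?_, ?_, ?_⟩
  · funext i; by_cases hi : i ∈ t <;> simp [hi]
  · calc hammingNorm (fun i => if i ∈ t then v i else 0)
        ≤ t.card := by
          apply Finset.card_le_card
          intro i hi
          simp only [Finset.mem_filter, Finset.mem_univ, true_and] at hi ⊢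
          by_contra h'; simp [h'] at hi
      _ ≤ δ := htc.le.trans (min_le_right _ _)
  · calc hammingNorm (fun i => if i ∈ t then 0 else v i)
        ≤ (s \ t).card := by
          apply Finset.card_le_card
          intro i hi
          simp only [Finset.mem_filter, Finset.mem_univ, true_and, Finset.mem_sdiff, hs] at hi ⊢
          by_cases h' : i ∈ t
          · simp [h'] at hi
          · simp [h'] at hi; exact ⟨hi, h'⟩
      _ ≤ s.card - t.card := le_of_eq (Finset.card_sdiff_of_subset hts)
      _ ≤ δ := by
          have h2 : t.card = min s.card δ := htc
          rw [hsc] at *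
          omega

/-- Corollary 4: for a linear FICP, a matrix `M` gives a `δ`-error-correcting functional index
code `x ↦ x·M` iff `wt(x·M) ≥ 2δ + 1` for every `x` in the union of the sets
`{s : s·M_{H_i} = 0, s·M_{W_i} ≠ 0}`. -/
theorem stmt_14 {F : Type*} [Field F] [Fintype F] [DecidableEq F]
    (n K N L δ : ℕ) (hc wc : Fin N → ℕ)
    (MH : ∀ i, Matrix (Fin (n * K)) (Fin (hc i)) F)
    (MW : ∀ i, Matrix (Fin (n * K)) (Fin (wc i)) F)
    (M : Matrix (Fin (n * K)) (Fin L) F) :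
    (∃ D : ∀ i, (Fin L → F) → (Fin (hc i) → F) → Fin (wc i) → F,
        ∀ (i : Fin N) (x : Fin (n * K) → F) (ε : Fin L → F), hammingNorm ε ≤ δ →
          D i (x ᵥ* M + ε) (x ᵥ* MH i) = x ᵥ* MW i)
    ↔ (∀ x ∈ ⋃ i, {s : Fin (n * K) → F | s ᵥ* MH i = 0 ∧ s ᵥ* MW i ≠ 0},
        2 * δ + 1 ≤ hammingNorm (x ᵥ* M)) := by
  classical
  constructor
  · rintro ⟨D, hD⟩ x hx
    simp only [Set.mem_iUnion, Set.mem_setOf_eq] at hx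
    obtain ⟨i, hH, hW⟩ := hx
    by_contra hlt
    push_neg at hlt
    obtain ⟨a, b, hab, ha, hb⟩ := norm_split (x ᵥ* M) δ (by omega)
    have h1 : D i ((0 : Fin (n*K) → F) ᵥ* M + a) ((0 : Fin (n*K) → F) ᵥ* MH i)
        = (0 : Fin (n*K) → F) ᵥ* MW i := hD i 0 a ha
    have h2 : D i (x ᵥ* M + (-b)) (x ᵥ* MH i) = x ᵥ* MW i := by
      apply hD i x (-b)
      have : hammingNorm (-b) = hammingNorm b := by
        simp [hammingNorm, neg_ne_zero]
      omega
    have heq : x ᵥ* M + (-b) = (0 : Fin (n*K) → F) ᵥ* M + a := by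
      simp only [Matrix.zero_vecMul, hab]; abel
    rw [heq, hH] at h2
    simp only [Matrix.zero_vecMul] at h1 h2
    exact hW (h2.symm.trans h1)
  · intro hmin
    refine ⟨fun i y h =>
      if hx : ∃ x', x' ᵥ* MH i = h ∧ hammingNorm (y - x' ᵥ* M) ≤ δ
      then hx.choose ᵥ* MW i else 0, ?_⟩
    intro i x ε hε
    have hex : ∃ x', x' ᵥ* MH i = x ᵥ* MH i ∧
        hammingNorm ((x ᵥ* M + ε) - x' ᵥ* M) ≤ δ := ⟨x, rfl, by simpa using hε⟩
    simp only [hex, dif_pos]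
    obtain ⟨hH', hd'⟩ := hex.choose_spec
    set x' := hex.choose
    have hdiff : hammingNorm ((x - x') ᵥ* M) ≤ 2 * δ := by
      have : (x - x') ᵥ* M = ((x ᵥ* M + ε) - x' ᵥ* M) + (-ε) := by
        rw [Matrix.sub_vecMul]; abel
      rw [this]
      calc hammingNorm (((x ᵥ* M + ε) - x' ᵥ* M) + (-ε))
          ≤ hammingNorm ((x ᵥ* M + ε) - x' ᵥ* M) + hammingNorm (-ε) := by
            have := hammingDist_triangle (((x ᵥ* M + ε) - x' ᵥ* M) + (-ε))
              (-ε) (0 : Fin L → F)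
            simp only [hammingDist_eq_hammingNorm] at this
            have hn : ∀ v : Fin L → F, hammingNorm (-v) = hammingNorm v := fun v => by
              simp [hammingNorm, neg_ne_zero]
            have e1 : -((x ᵥ* M + ε) - x' ᵥ* M + -ε) + 0 = -((x ᵥ* M + ε) - x' ᵥ* M + -ε) := by abel
            have e2 : -((x ᵥ* M + ε) - x' ᵥ* M + -ε) + -ε = -((x ᵥ* M + ε) - x' ᵥ* M) := by abel
            have e3 : - -ε + (0 : Fin L → F) = -(-ε) := by abel
            rw [e1, e2, e3, hn, hn, hn] at this
            exact this
        _ ≤ δ + δ := by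
            have : hammingNorm (-ε) = hammingNorm ε := by
              simp [hammingNorm, neg_ne_zero]
            omega
        _ = 2 * δ := by ring
    have hkey : ¬ ((x - x') ᵥ* MH i = 0 ∧ (x - x') ᵥ* MW i ≠ 0) := by
      intro hmem
      have := hmin (x - x') (by simp only [Set.mem_iUnion, Set.mem_setOf_eq]; exact ⟨i, hmem⟩)
      omega
    have hH0 : (x - x') ᵥ* MH i = 0 := by
      rw [Matrix.sub_vecMul, hH', sub_self]
    have : (x - x') ᵥ* MW i = 0 := by
      by_contra h'
      exact hkey ⟨hH0, h'⟩
    rw [Matrix.sub_vecMul, sub_eq_zero] at this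
    exact this.symm
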